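/- For every integer d ≥ 2 and 0 ≤ i ≤ d, the rational number C(d,i)·(i-1)·(d-i-1)/(d-1) is an integer. -/

import Mathlib

/-- For `d ≥ 2` and `0 ≤ i ≤ d`, the rational number
`C(d,i)·(i-1)·(d-i-1)/(d-1)` is an integer. -/
theorem stmt_11 (d i : ℕ) (hd : 2 ≤ d) (hi : i ≤ d) :
    ∃ k : ℤ, ((d.choose i : ℚ) * ((i : ℚ) - 1) * ((d : ℚ) - (i : ℚ) - 1)) /
        ((d : ℚ) - 1) = (k : ℚ) := by
  obtain ⟨e, rfl⟩ : ∃ e, d = e + 2 := ⟨d - 2, by omega⟩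
  have hne : ((e : ℚ) + 2) - 1 ≠ 0 := by
    have : (0:ℚ) ≤ (e:ℚ) := Nat.cast_nonneg e
    intro h; nlinarith
  rcases Nat.eq_zero_or_pos i with rfl | hpos
  · refine ⟨-1, ?_⟩
    simp only [Nat.choose_zero_right, Nat.cast_one, Nat.cast_zero]
    rw [div_eq_iff (by push_cast; exact hne)]
    push_cast
    ring
  · obtain ⟨j, rfl⟩ : ∃ j, i = j + 1 := ⟨i - 1, by omega⟩
    have hje : j ≤ e + 1 := by omega
    -- key Nat identity: C(e+2,j+1)*(j+1)*(e+1-j) = (e+2)*(e+1)*C(e,j)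
    have hnat : (e + 2).choose (j + 1) * (j + 1) * (e + 1 - j)
        = (e + 2) * ((e).choose j * (e + 1)) := by
      have h1 : (e + 2).choose (j + 1) * (j + 1) = (e + 2) * (e + 1).choose j := by
        simpa [Nat.succ_eq_add_one, add_assoc, mul_comm] using (Nat.add_one_mul_choose_eq (e + 1) j).symm
      have h2 : (e).choose j * (e + 1) = (e + 1).choose j * (e + 1 - j) :=
        Nat.choose_mul_succ_eq e j
      calc (e + 2).choose (j + 1) * (j + 1) * (e + 1 - j)
          = (e + 2) * ((e + 1).choose j * (e + 1 - j)) := by rw [h1]; ring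
        _ = (e + 2) * ((e).choose j * (e + 1)) := by rw [← h2]
    have key : ((e + 2).choose (j + 1) : ℚ) * ((j : ℚ) + 1) * ((e : ℚ) + 1 - (j : ℚ))
        = ((e : ℚ) + 2) * (((e).choose j : ℚ) * ((e : ℚ) + 1)) := by
      have := congrArg (fun n : ℕ => (n : ℚ)) hnat
      push_cast [Nat.cast_sub hje] at this
      linarith [this]
    refine ⟨(e + 2) * (e).choose j - (e + 2).choose (j + 1), ?_⟩
    push_cast
    rw [div_eq_iff hne]
    linear_combination key
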